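/- A binary subshift (X,σ) is non-tame (i.e. the cardinality of its Ellis semigroup E(X) is strictly greater than 2^ℵ₀) if and only if X admits an uncountable choice domain. -/

import Mathlib

open Filter Topology

noncomputable section

abbrev BinSeq : Type := ℕ → Bool

/-- The left shift on `{0,1}^ℕ`. -/
def binShift (x : BinSeq) : BinSeq := fun n => x (n + 1)

/-- A binary subshift: a nonempty closed shift-invariant subset of `{0,1}^ℕ`. -/
structure BinarySubshift where
  carrier : Set BinSeq
  nonempty : carrier.Nonempty
  isClosed : IsClosed carrier
  shift_mem : ∀ x ∈ carrier, binShift x ∈ carrier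

namespace BinarySubshift

variable (X : BinarySubshift)

/-- The shift map restricted to the subshift. -/
def S : X.carrier → X.carrier := fun x => ⟨binShift x, X.shift_mem x x.2⟩

/-- The (forward) Ellis semigroup `E(X)`: the closure of `{σⁿ : n ≥ 1}` in `X^X`. -/
def Ellis : Set (X.carrier → X.carrier) := closure (Set.range fun n : ℕ => X.S^[n + 1])

/-- `(X,σ)` is non-tame if `|E(X)| > 2^ℵ₀`. -/
def NonTame : Prop := Cardinal.continuum < Cardinal.mk ↥X.Ellis

end BinarySubshift

/-- `𝒯` is a choice domain: for all `m, n`, any `n` distinct points of `𝒯` and any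
choice functions `φ¹,…,φⁿ ∈ {0,1}^m` there are times `m < τ₁ < … < τ_m` realising
the prescribed values. -/
def IsChoiceDomain (𝒯 : Set BinSeq) : Prop :=
  ∀ (m n : ℕ) (x : Fin n → BinSeq), (∀ i, x i ∈ 𝒯) → Function.Injective x →
    ∀ φ : Fin n → Fin m → Bool, ∃ τ : Fin m → ℕ,
      StrictMono τ ∧ (∀ k, m < τ k) ∧ ∀ i k, x i (τ k) = φ i k

/-- `J` is an independence set for the pair `(A0, A1)` in `C`. -/
def IsIndependenceSet (C A0 A1 : Set BinSeq) (J : Set ℕ) : Prop :=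
  ∀ I : Finset ℕ, ↑I ⊆ J → ∀ φ : ℕ → Bool, ∃ x ∈ C, ∀ i ∈ I,
    binShift^[i] x ∈ (if φ i = true then A1 else A0)

-- ===== Layer 1 : basic lemmas =====

lemma binShift_iter_apply (n : ℕ) (y : BinSeq) (j : ℕ) :
    binShift^[n] y j = y (j + n) := by
  induction n generalizing y j with
  | zero => rfl
  | succ n ih =>
      rw [Function.iterate_succ_apply]
      have : binShift^[n] (binShift y) j = (binShift y) (j + n) := ih _ _
      rw [this]
      simp [binShift, Nat.add_assoc]

lemma binShift_iter_mem (X : BinarySubshift) (n : ℕ) {y : BinSeq} (hy : y ∈ X.carrier) :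
    binShift^[n] y ∈ X.carrier := by
  induction n with
  | zero => exact hy
  | succ n ih => rw [Function.iterate_succ_apply']; exact X.shift_mem _ ih

lemma S_iter_val (X : BinarySubshift) (n : ℕ) (x : X.carrier) :
    ((X.S^[n]) x).val = binShift^[n] x.val := by
  induction n generalizing x with
  | zero => rfl
  | succ n ih =>
      rw [Function.iterate_succ_apply, Function.iterate_succ_apply]
      rw [ih (X.S x)]; rfl

open Classical in
def ulim (U : Ultrafilter ℕ) (y : ℕ → BinSeq) : BinSeq :=
  fun j => if {m | y m j = true} ∈ U then true else false

lemma ulim_eventually (U : Ultrafilter ℕ) (y : ℕ → BinSeq) (j : ℕ) :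
    ∀ᶠ m in (U : Filter ℕ), y m j = ulim U y j := by
  unfold ulim
  by_cases h : {m | y m j = true} ∈ U
  · simp only [h, if_pos]
    filter_upwards [h] with m hm using hm
  · simp only [h, if_neg, if_false]
    have h' : {m | y m j = true}ᶜ ∈ U := Ultrafilter.compl_mem_iff_notMem.2 h
    filter_upwards [h'] with m hm
    simpa using hm

lemma tendsto_ulim (U : Ultrafilter ℕ) (y : ℕ → BinSeq) :
    Tendsto y (U : Filter ℕ) (𝓝 (ulim U y)) := by
  rw [tendsto_pi_nhds]
  intro j
  exact tendsto_nhds_of_eventually_eq (ulim_eventually U y j)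

lemma ulim_eq (U : Ultrafilter ℕ) (y : ℕ → BinSeq) {j : ℕ} {b : Bool}
    (h : {m | y m j = b} ∈ U) : ulim U y j = b := by
  have h2 := ulim_eventually U y j
  have h1 : ∀ᶠ m in (U : Filter ℕ), y m j = b := h
  rcases (h1.and h2).exists with ⟨m, hm1, hm2⟩
  rw [← hm2, hm1]

lemma ulim_mem_of_closed {C : Set BinSeq} (hC : IsClosed C) (U : Ultrafilter ℕ)
    (y : ℕ → BinSeq) (hy : ∀ m, y m ∈ C) : ulim U y ∈ C :=
  hC.mem_of_tendsto (tendsto_ulim U y) (Eventually.of_forall hy)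

-- ===== Layer 2 : an independent family on ℕ indexed by Set ℕ =====

def IndexCode : Type := Finset ℕ × Finset (Finset ℕ)

instance : Countable IndexCode := by unfold IndexCode; infer_instance
instance : Infinite IndexCode := by unfold IndexCode; infer_instance

def codeEquiv : ℕ ≃ IndexCode := ((nonempty_denumerable IndexCode).some.eqv).symm

open Classical in
def traceF (F : Finset ℕ) (A : Set ℕ) : Finset ℕ := F.filter (· ∈ A)

lemma traceF_mono {F : Finset ℕ} {A : Set ℕ} : traceF F A ⊆ F := by
  classical
  exact Finset.filter_subset _ _

lemma mem_traceF {F : Finset ℕ} {A : Set ℕ} {x : ℕ} :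
    x ∈ traceF F A ↔ x ∈ F ∧ x ∈ A := by
  classical
  simp [traceF]

def YFam (A : Set ℕ) : Set ℕ := {k | traceF (codeEquiv k).1 A ∈ (codeEquiv k).2}

open Classical in
lemma YFam_indep (𝒜 : Finset (Set ℕ)) (c : Set ℕ → Bool) (N : ℕ) :
    ∃ k, N < k ∧ ∀ A ∈ 𝒜, (k ∈ YFam A ↔ c A = true) := by
  classical
  -- a separating finite set
  have hsep : ∀ A B : Set ℕ, A ≠ B → ∃ x, ¬ (x ∈ A ↔ x ∈ B) := by
    intro A B hAB
    by_contra h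
    push_neg at h
    exact hAB (Set.ext h)
  let sep : Set ℕ → Set ℕ → ℕ := fun A B =>
    if h : A ≠ B then (hsep A B h).choose else 0
  let F₀ : Finset ℕ := (𝒜 ×ˢ 𝒜).image (fun p => sep p.1 p.2)
  -- the set of good codes
  set V : Set ℕ := {k | ∀ A ∈ 𝒜, (k ∈ YFam A ↔ c A = true)} with hV
  -- for any F ⊇ F₀ the canonical code works
  have hgood : ∀ F : Finset ℕ, F₀ ⊆ F →
      codeEquiv.symm (F, (𝒜.filter (fun A => c A = true)).image (fun A => traceF F A)) ∈ V := by
    intro F hF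
    intro A hA
    have hcode : codeEquiv (codeEquiv.symm
        (F, (𝒜.filter (fun A => c A = true)).image (fun A => traceF F A))) =
        (F, (𝒜.filter (fun A => c A = true)).image (fun A => traceF F A)) :=
      codeEquiv.apply_symm_apply _
    constructor
    · intro hk
      have hk' : traceF F A ∈ (𝒜.filter (fun A => c A = true)).image (fun A => traceF F A) := by
        have := hk
        rw [YFam, Set.mem_setOf_eq, hcode] at this
        exact this
      rcases Finset.mem_image.1 hk' with ⟨B, hB, hBA⟩
      rcases Finset.mem_filter.1 hB with ⟨hB𝒜, hcB⟩
      -- A = B by separation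
      by_cases hABeq : A = B
      · rw [hABeq]; exact hcB
      · exfalso
        have hne : B ≠ A := fun h => hABeq h.symm
        have hx := (hsep B A hne).choose_spec
        set x := (hsep B A hne).choose
        have hxF : x ∈ F := by
          apply hF
          apply Finset.mem_image.2
          exact ⟨(B, A), Finset.mem_product.2 ⟨hB𝒜, hA⟩, by simp [sep, hne]; rfl⟩
        have : (x ∈ traceF F B) ↔ (x ∈ traceF F A) := by rw [hBA]
        rw [mem_traceF, mem_traceF] at this
        simp only [hxF, true_and] at this
        first
        | exact hx this
        | exact hx this.symm
    · intro hc
      rw [YFam, Set.mem_setOf_eq, hcode]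
      exact Finset.mem_image.2 ⟨A, Finset.mem_filter.2 ⟨hA, hc⟩, rfl⟩
  -- infinitely many codes
  have hinf : V.Infinite := by
    have : Function.Injective (fun n : ℕ =>
        codeEquiv.symm ((insert (n + (F₀.sup id) + 1) F₀ : Finset ℕ),
          ((𝒜.filter (fun A => c A = true)).image
            (fun A => traceF (insert (n + (F₀.sup id) + 1) F₀) A)))) := by
      intro n n' h
      have h2 := congrArg (fun k => (codeEquiv k).1) h
      simp only [Equiv.apply_symm_apply] at h2
      have hn : n + F₀.sup id + 1 ∈ (insert (n' + F₀.sup id + 1) F₀ : Finset ℕ) := by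
        have e : ∀ z : IndexCode, (codeEquiv (codeEquiv.symm z)).1 = z.1 :=
          fun z => congrArg Prod.fst (codeEquiv.apply_symm_apply z)
        have h3 : (insert (n + F₀.sup id + 1) F₀ : Finset ℕ) = insert (n' + F₀.sup id + 1) F₀ :=
          (e _).symm.trans (h2.trans (e _))
        rw [← h3]; exact Finset.mem_insert_self _ _
      rcases Finset.mem_insert.1 hn with h3 | h3
      · omega
      · exfalso
        have := Finset.le_sup (f := id) h3
        simp only [id] at this
        omega
    apply Set.infinite_of_injective_forall_mem this
    intro n
    exact hgood _ (Finset.subset_insert _ _)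
  rcases hinf.exists_gt N with ⟨k, hk, hkN⟩
  exact ⟨k, hkN, hk⟩

lemma YFam_injective : Function.Injective YFam := by
  intro A B hAB
  by_contra hne
  classical
  rcases YFam_indep {A, B} (fun C => decide (C = A)) 0 with ⟨k, -, hk⟩
  have hA := hk A (by simp)
  have hB := hk B (by simp)
  simp only [decide_eq_true_eq] at hA hB
  have hkA : k ∈ YFam A := by
    apply hA.2
    first | trivial | rfl | simp
  have hkB : ¬ k ∈ YFam B := fun h => hne ((hB.1 h).symm)
  rw [hAB] at hkA
  exact hkB hkA
-- ===== Layer 3 : shattering systems =====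

structure ShatterSys (X : BinarySubshift) where
  t : ℕ → ℕ
  mono : StrictMono t
  pos : ∀ k, 1 ≤ t k
  shatters : ∀ (m : ℕ) (ε : Fin m → Bool), ∃ y ∈ X.carrier, ∀ k : Fin m, y (t k.val) = ε k

namespace ShatterSys

variable {X : BinarySubshift} (T : ShatterSys X)

/-- a point of the subshift whose values along the times `t` follow `a`. -/
def pt (a : ℕ → Bool) : BinSeq :=
  ulim (Ultrafilter.of atTop)
    (fun m => (T.shatters m (fun k => a k.val)).choose)

lemma pt_mem (a : ℕ → Bool) : T.pt a ∈ X.carrier := by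
  apply ulim_mem_of_closed X.isClosed
  intro m
  exact (T.shatters m (fun k => a k.val)).choose_spec.1

lemma pt_val (a : ℕ → Bool) (k : ℕ) : T.pt a (T.t k) = a k := by
  apply ulim_eq
  have h1 : {m : ℕ | k < m} ∈ ((Ultrafilter.of atTop : Ultrafilter ℕ) : Filter ℕ) := by
    exact Ultrafilter.of_le atTop (eventually_gt_atTop k)
  apply Filter.mem_of_superset h1
  intro m hm
  have := (T.shatters m (fun k => a k.val)).choose_spec.2 ⟨k, hm⟩
  simpa using this

/-- the Ellis-semigroup element obtained as `p`-limit of `σ^{t k}`. -/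
def efun (p : Ultrafilter ℕ) : X.carrier → X.carrier := fun x =>
  ⟨ulim p (fun k => binShift^[T.t k] x.val),
   ulim_mem_of_closed X.isClosed _ _ (fun k => binShift_iter_mem X _ x.2)⟩

lemma efun_tendsto (p : Ultrafilter ℕ) :
    Tendsto (fun k => X.S^[T.t k]) (p : Filter ℕ) (𝓝 (T.efun p)) := by
  rw [tendsto_pi_nhds]
  intro x
  rw [tendsto_subtype_rng]
  have : (fun k => ((X.S^[T.t k]) x : BinSeq)) = fun k => binShift^[T.t k] x.val := by
    funext k; exact S_iter_val X _ x
  rw [this]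
  exact tendsto_ulim p _

lemma efun_mem_Ellis (p : Ultrafilter ℕ) : T.efun p ∈ X.Ellis := by
  apply mem_closure_of_tendsto (T.efun_tendsto p)
  apply Eventually.of_forall
  intro k
  refine ⟨T.t k - 1, ?_⟩
  have h : T.t k - 1 + 1 = T.t k := Nat.succ_pred_eq_of_pos (T.pos k)
  show X.S^[T.t k - 1 + 1] = X.S^[T.t k]
  rw [h]

lemma efun_val_eq (p : Ultrafilter ℕ) (x : X.carrier) {j : ℕ} {b : Bool}
    (h : {k | x.val (j + T.t k) = b} ∈ p) : (T.efun p x).val j = b := by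
  apply ulim_eq
  have : {k | binShift^[T.t k] x.val j = b} = {k | x.val (j + T.t k) = b} := by
    ext k; simp [binShift_iter_apply]
  rw [this]
  exact h

end ShatterSys

-- ===== Layer 3b : ultrafilters from the independent family =====

section PC

open Classical in
/-- the generating family of sets for the ultrafilter attached to `c`. -/
def genSets (c : Set ℕ → Bool) : Set (Set ℕ) :=
  {Z | ∃ A : Set ℕ, Z = (if c A = true then YFam A else (YFam A)ᶜ)}

lemma genSets_fip (c : Set ℕ → Bool) :
    ∀ t : Set (Set ℕ), t ⊆ genSets c → t.Finite → (⋂₀ t).Nonempty := by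
  classical
  intro t ht htfin
  -- choose indices
  have hch : ∀ u ∈ t, ∃ A : Set ℕ, u = (if c A = true then YFam A else (YFam A)ᶜ) := ht
  let idx : Set ℕ → Set ℕ := fun u => if h : u ∈ t then (hch u h).choose else ∅
  let 𝒜 : Finset (Set ℕ) := htfin.toFinset.image idx
  rcases YFam_indep 𝒜 c 0 with ⟨k, -, hk⟩
  refine ⟨k, ?_⟩
  rw [Set.mem_sInter]
  intro u hu
  have hidx : u = (if c (idx u) = true then YFam (idx u) else (YFam (idx u))ᶜ) := by
    simp only [idx, dif_pos hu]
    exact (hch u hu).choose_spec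
  have h𝒜 : idx u ∈ 𝒜 := Finset.mem_image.2 ⟨u, htfin.mem_toFinset.2 hu, rfl⟩
  have hiff := hk (idx u) h𝒜
  by_cases hc : c (idx u) = true
  · rw [hidx, if_pos hc]; exact hiff.2 hc
  · rw [hidx, if_neg hc]
    intro hmem
    exact hc (hiff.1 hmem)

instance genNeBot (c : Set ℕ → Bool) : NeBot (Filter.generate (genSets c)) :=
  Filter.generate_neBot_iff.2 (genSets_fip c)

def pc (c : Set ℕ → Bool) : Ultrafilter ℕ := Ultrafilter.of (Filter.generate (genSets c))

lemma mem_pc_of_true {c : Set ℕ → Bool} {A : Set ℕ} (h : c A = true) : YFam A ∈ pc c := by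
  apply Ultrafilter.of_le
  apply Filter.mem_generate_of_mem
  exact ⟨A, by rw [if_pos h]⟩

lemma mem_pc_of_false {c : Set ℕ → Bool} {A : Set ℕ} (h : c A = false) : (YFam A)ᶜ ∈ pc c := by
  apply Ultrafilter.of_le
  apply Filter.mem_generate_of_mem
  exact ⟨A, by rw [if_neg (by simp [h])]⟩

end PC
-- ===== Layer 4 : consequences of a shattering system =====

section Conseq

variable {X : BinarySubshift} (T : ShatterSys X)
-- note: `T` bound explicitly in the cardinality theorems below

open Classical in
/-- the indicator sequence of `YFam A`. -/
def chiY (A : Set ℕ) : ℕ → Bool := fun k => if k ∈ YFam A then true else false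

lemma chiY_eq_true_iff {A : Set ℕ} {k : ℕ} : chiY A k = true ↔ k ∈ YFam A := by
  classical
  simp [chiY]

lemma chiY_eq_false_iff {A : Set ℕ} {k : ℕ} : chiY A k = false ↔ k ∉ YFam A := by
  classical
  simp [chiY]

/-- the canonical point associated to a set `A` of naturals. -/
def ShatterSys.ptY (A : Set ℕ) : BinSeq := T.pt (chiY A)

lemma ShatterSys.ptY_mem (A : Set ℕ) : T.ptY A ∈ X.carrier := T.pt_mem _

lemma ShatterSys.ptY_val (A : Set ℕ) (k : ℕ) :
    T.ptY A (T.t k) = chiY A k := T.pt_val _ k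

lemma ShatterSys.ptY_injective : Function.Injective T.ptY := by
  intro A B h
  apply YFam_injective
  ext k
  have := congrFun h (T.t k)
  rw [T.ptY_val A k, T.ptY_val B k] at this
  rw [← chiY_eq_true_iff, ← chiY_eq_true_iff, this]

/-- `|E(X)| > 𝔠` given a shattering system. -/
theorem ShatterSys.nonTame (T : ShatterSys X) : X.NonTame := by
  classical
  -- the injection from `Set ℕ → Bool` into the Ellis semigroup
  let Φ : (Set ℕ → Bool) → ↥X.Ellis := fun c => ⟨T.efun (pc c), T.efun_mem_Ellis (pc c)⟩
  have hΦ : Function.Injective Φ := by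
    intro c c' h
    by_contra hne
    push_neg at hne
    rcases Function.ne_iff.1 hne with ⟨A, hA⟩
    -- wlog c A = true
    have key : ∀ c c' : Set ℕ → Bool, c A = true → c' A = false →
        T.efun (pc c) ≠ T.efun (pc c') := by
      intro c c' hc hc' heq
      set x : X.carrier := ⟨T.ptY A, T.ptY_mem A⟩ with hx
      have h1 : (T.efun (pc c) x).val 0 = true := by
        apply T.efun_val_eq
        have : {k | x.val (0 + T.t k) = true} = YFam A := by
          ext k
          simp only [Set.mem_setOf_eq, Nat.zero_add, hx]
          rw [T.ptY_val A k]
          exact chiY_eq_true_iff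
        rw [this]
        exact mem_pc_of_true hc
      have h2 : (T.efun (pc c') x).val 0 = false := by
        apply T.efun_val_eq
        have : {k | x.val (0 + T.t k) = false} = (YFam A)ᶜ := by
          ext k
          simp only [Set.mem_setOf_eq, Nat.zero_add, hx, Set.mem_compl_iff]
          rw [T.ptY_val A k]
          exact chiY_eq_false_iff
        rw [this]
        exact mem_pc_of_false hc'
      rw [heq] at h1
      rw [h1] at h2
      simp at h2
    have hΦcc' : T.efun (pc c) = T.efun (pc c') := congrArg Subtype.val h
    cases hca : c A <;> cases hca' : c' A
    · rw [hca, hca'] at hA; exact hA rfl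
    · exact key c' c hca' hca hΦcc'.symm
    · exact key c c' hca hca' hΦcc'
    · rw [hca, hca'] at hA; exact hA rfl
  -- cardinality
  have hle : Cardinal.mk (Set ℕ → Bool) ≤ Cardinal.mk ↥X.Ellis := Cardinal.mk_le_of_injective hΦ
  have hcard : Cardinal.mk (Set ℕ → Bool) = 2 ^ Cardinal.continuum := by
    rw [Cardinal.mk_arrow]
    simp [Cardinal.mk_set, Cardinal.mk_bool]
  rw [hcard] at hle
  exact lt_of_lt_of_le (Cardinal.cantor Cardinal.continuum) hle

/-- an uncountable choice domain from a shattering system. -/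
theorem ShatterSys.choiceDomain (T : ShatterSys X) :
    ∃ 𝒯 ⊆ X.carrier, ¬𝒯.Countable ∧ IsChoiceDomain 𝒯 := by
  classical
  refine ⟨Set.range T.ptY, ?_, ?_, ?_⟩
  · rintro y ⟨A, rfl⟩; exact T.ptY_mem A
  · intro hcnt
    have h1 : Cardinal.mk (Set.range T.ptY) ≤ Cardinal.aleph0 := hcnt.le_aleph0
    rw [Cardinal.mk_range_eq _ T.ptY_injective] at h1
    rw [Cardinal.mk_set, Cardinal.mk_nat, Cardinal.two_power_aleph0] at h1
    exact absurd h1 (not_le.2 Cardinal.aleph0_lt_continuum)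
  · intro m n x hx hinj φ
    -- recover the sets
    choose A hA using hx
    have hAinj : Function.Injective A := by
      intro i i' h
      apply hinj
      rw [← hA i, ← hA i', h]
    set 𝒜 : Finset (Set ℕ) := Finset.image A Finset.univ with h𝒜
    -- the column choice functions
    let c : ℕ → (Set ℕ → Bool) := fun l B =>
      if h : ∃ i, A i = B then (if hl : l < m then φ h.choose ⟨l, hl⟩ else false) else false
    have hc : ∀ (i : Fin n) (l : ℕ) (hl : l < m), c l (A i) = φ i ⟨l, hl⟩ := by
      intro i l hl
      have hex : ∃ i', A i' = A i := ⟨i, rfl⟩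
      have : hex.choose = i := hAinj hex.choose_spec
      simp only [c, dif_pos hex, dif_pos hl, this]
    -- build the times recursively
    let g : ℕ → ℕ := fun l => Nat.rec ((YFam_indep 𝒜 (c 0) m).choose)
      (fun l' prev => (YFam_indep 𝒜 (c (l' + 1)) prev).choose) l
    have hg0 : m < g 0 := (YFam_indep 𝒜 (c 0) m).choose_spec.1
    have hgsucc : ∀ l, g l < g (l + 1) := fun l =>
      (YFam_indep 𝒜 (c (l + 1)) (g l)).choose_spec.1
    have hgspec : ∀ l, ∀ B ∈ 𝒜, (g l ∈ YFam B ↔ c l B = true) := by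
      intro l
      cases l with
      | zero => exact (YFam_indep 𝒜 (c 0) m).choose_spec.2
      | succ l' => exact (YFam_indep 𝒜 (c (l' + 1)) (g l')).choose_spec.2
    have hgmono : StrictMono g := strictMono_nat_of_lt_succ hgsucc
    refine ⟨fun l => T.t (g l.val), ?_, ?_, ?_⟩
    · intro l l' hll'
      exact T.mono (hgmono hll')
    · intro l
      calc m < g 0 := hg0
        _ ≤ g l.val := hgmono.le_iff_le.2 (Nat.zero_le _)
        _ ≤ T.t (g l.val) := T.mono.le_apply
    · intro i l
      have hxi : x i = T.ptY (A i) := (hA i).symm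
      rw [hxi, T.ptY_val (A i) (g l.val)]
      have hmem : A i ∈ 𝒜 := Finset.mem_image.2 ⟨i, Finset.mem_univ i, rfl⟩
      have hiff := hgspec l.val (A i) hmem
      rw [hc i l.val l.isLt] at hiff
      have heta : (⟨l.val, l.isLt⟩ : Fin m) = l := rfl
      rw [heta] at hiff
      cases hφ : φ i l
      · rw [chiY_eq_false_iff]
        intro hmem'
        rw [hφ] at hiff
        simpa using hiff.1 hmem'
      · rw [chiY_eq_true_iff]
        apply hiff.2
        rw [hφ]

end Conseq
-- ===== Layer 5 : from a choice domain to a shattering system =====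

section Backward

variable {𝒯 : Set BinSeq}

lemma exists_split (hcd : IsChoiceDomain 𝒯)
    {ι : Type} [Fintype ι] (𝒮 : ι → Set BinSeq)
    (hsub : ∀ j, 𝒮 j ⊆ 𝒯) (hunc : ∀ j, ¬ (𝒮 j).Countable)
    (hdisj : ∀ j j', j ≠ j' → Disjoint (𝒮 j) (𝒮 j')) (N : ℕ) :
    ∃ t, N < t ∧ ∀ j b, ¬ {y ∈ 𝒮 j | y t = b}.Countable := by
  classical
  set Bad : ι → Set BinSeq :=
    fun j => {y ∈ 𝒮 j | ∃ t, N < t ∧ {z ∈ 𝒮 j | z t = y t}.Countable} with hBadDef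
  have hBadCnt : ∀ j, (Bad j).Countable := by
    intro j
    have hsubU : Bad j ⊆ ⋃ (t : ℕ), ⋃ (b : Bool),
        (if N < t ∧ {z ∈ 𝒮 j | z t = b}.Countable then {z ∈ 𝒮 j | z t = b} else ∅) := by
      rintro y ⟨hy𝒮, t, hNt, hcnt⟩
      refine Set.mem_iUnion.2 ⟨t, Set.mem_iUnion.2 ⟨y t, ?_⟩⟩
      rw [if_pos ⟨hNt, hcnt⟩]
      exact ⟨hy𝒮, rfl⟩
    apply Set.Countable.mono hsubU
    apply Set.countable_iUnion
    intro t
    apply Set.countable_iUnion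
    intro b
    by_cases h : N < t ∧ {z ∈ 𝒮 j | z t = b}.Countable
    · rw [if_pos h]; exact h.2
    · rw [if_neg h]; exact Set.countable_empty
  have hgood : ∀ j, ∃ y0 y1, (y0 ∈ 𝒮 j ∧ y0 ∉ Bad j) ∧ (y1 ∈ 𝒮 j ∧ y1 ∉ Bad j) ∧ y0 ≠ y1 := by
    intro j
    have h1 : ¬ (𝒮 j \ Bad j).Countable := by
      intro h
      exact hunc j (Set.Countable.mono (Set.subset_diff_union _ (Bad j))
        (h.union (hBadCnt j)))
    have h2 : ¬ (𝒮 j \ Bad j).Subsingleton := fun h => h1 h.countable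
    rw [Set.not_subsingleton_iff] at h2
    rcases h2 with ⟨y0, hy0, y1, hy1, hne⟩
    exact ⟨y0, y1, ⟨hy0.1, hy0.2⟩, ⟨hy1.1, hy1.2⟩, hne⟩
  choose y0 y1 hy0 hy1 hne01 using hgood
  let e : (ι ⊕ ι) ≃ Fin (Fintype.card ι + Fintype.card ι) :=
    Fintype.equivFinOfCardEq (by simp)
  have hjm : ∀ w : ι ⊕ ι, Sum.elim y0 y1 w ∈ 𝒮 (Sum.elim id id w) := by
    rintro (j | j)
    · exact (hy0 j).1
    · exact (hy1 j).1
  have helim : Function.Injective (Sum.elim y0 y1) := by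
    intro u v h
    have hj : Sum.elim id id u = Sum.elim id id v := by
      by_contra hj
      have h1 := hjm u
      have h2 := hjm v
      rw [h] at h1
      exact (Set.disjoint_left.1 (hdisj _ _ hj)) h1 h2
    match u, v with
    | Sum.inl j, Sum.inl j' => simp only [Sum.elim_inl, id] at hj; rw [hj]
    | Sum.inl j, Sum.inr j' =>
        simp only [Sum.elim_inl, Sum.elim_inr, id] at hj
        subst hj
        exact absurd h (hne01 j)
    | Sum.inr j, Sum.inl j' =>
        simp only [Sum.elim_inl, Sum.elim_inr, id] at hj
        subst hj
        exact absurd h.symm (hne01 j)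
    | Sum.inr j, Sum.inr j' => simp only [Sum.elim_inr, id] at hj; rw [hj]
  set x : Fin (Fintype.card ι + Fintype.card ι) → BinSeq :=
    fun i => Sum.elim y0 y1 (e.symm i) with hxdef
  have hxmem : ∀ i, x i ∈ 𝒯 := by
    intro i
    exact hsub _ (hjm (e.symm i))
  have hxinj : Function.Injective x := helim.comp e.symm.injective
  rcases hcd (N + 1) _ x hxmem hxinj
      (fun i _ => Sum.elim (fun _ => false) (fun _ => true) (e.symm i)) with
    ⟨τ, hτmono, hτgt, hτval⟩
  set k0 : Fin (N + 1) := ⟨0, Nat.succ_pos N⟩ with hk0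
  refine ⟨τ k0, lt_trans (Nat.lt_succ_self N) (hτgt k0), ?_⟩
  have hv0 : ∀ j, y0 j (τ k0) = false := by
    intro j
    have := hτval (e (Sum.inl j)) k0
    simpa [hxdef] using this
  have hv1 : ∀ j, y1 j (τ k0) = true := by
    intro j
    have := hτval (e (Sum.inr j)) k0
    simpa [hxdef] using this
  intro j b hcnt
  cases b with
  | false =>
      apply (hy0 j).2
      refine ⟨(hy0 j).1, τ k0, lt_trans (Nat.lt_succ_self N) (hτgt k0), ?_⟩
      rw [hv0 j]
      exact hcnt
  | true =>
      apply (hy1 j).2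
      refine ⟨(hy1 j).1, τ k0, lt_trans (Nat.lt_succ_self N) (hτgt k0), ?_⟩
      rw [hv1 j]
      exact hcnt

/-- The state invariant for the recursive construction of a shattering system. -/
def SInv (𝒯 : Set BinSeq) (m : ℕ) (s : (ℕ → ℕ) × ((ℕ → Bool) → Set BinSeq)) : Prop :=
  (∀ k l : ℕ, k < l → l < m → s.1 k < s.1 l) ∧
  (∀ k, k < m → 1 ≤ s.1 k) ∧
  (∀ a, s.2 a ⊆ 𝒯) ∧
  (∀ a, ¬ (s.2 a).Countable) ∧
  (∀ a y, y ∈ s.2 a → ∀ k, k < m → y (s.1 k) = a k) ∧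
  (∀ a b, (∀ k, k < m → a k = b k) → s.2 a = s.2 b)

lemma sinv_step (hcd : IsChoiceDomain 𝒯) (m : ℕ)
    (s : (ℕ → ℕ) × ((ℕ → Bool) → Set BinSeq)) (hs : SInv 𝒯 m s) :
    ∃ s', SInv 𝒯 (m + 1) s' ∧ (∀ k, k ≠ m → s'.1 k = s.1 k) ∧ (∀ a, s'.2 a ⊆ s.2 a) := by
  classical
  obtain ⟨hmono, hpos, hsub, hunc, hval, hdep⟩ := hs
  -- the finite family at this stage
  set ext : (Fin m → Bool) → (ℕ → Bool) :=
    fun ε k => if h : k < m then ε ⟨k, h⟩ else false with hext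
  set G : (Fin m → Bool) → Set BinSeq := fun ε => s.2 (ext ε) with hG
  have hGdisj : ∀ ε ε', ε ≠ ε' → Disjoint (G ε) (G ε') := by
    intro ε ε' hεε'
    have hk : ∃ k : Fin m, ε k ≠ ε' k := by
      by_contra hk
      push_neg at hk
      exact hεε' (funext hk)
    rcases hk with ⟨k, hkne⟩
    rw [Set.disjoint_left]
    intro y hy hy'
    have h1 := hval (ext ε) y hy k.val k.isLt
    have h2 := hval (ext ε') y hy' k.val k.isLt
    rw [h1] at h2
    apply hkne
    have e1 : ext ε k.val = ε k := by simp [hext]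
    have e2 : ext ε' k.val = ε' k := by simp [hext]
    rw [← e1, ← e2, h2]
  set N : ℕ := (Finset.range (m + 1)).sup s.1 with hN
  rcases exists_split hcd G (fun ε => hsub _) (fun ε => hunc _) hGdisj N with
    ⟨t, hNt, hsplit⟩
  set t' : ℕ → ℕ := Function.update s.1 m t with ht'
  set fam' : (ℕ → Bool) → Set BinSeq := fun a => {y ∈ s.2 a | y t = a m} with hfam'
  have ht'ne : ∀ k, k ≠ m → t' k = s.1 k := fun k hk => Function.update_of_ne hk _ _
  have ht'm : t' m = t := Function.update_self _ _ _
  have hmono' : ∀ k l : ℕ, k < l → l < m + 1 → t' k < t' l := by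
    intro k l hkl hlm
    rcases Nat.lt_succ_iff_lt_or_eq.1 hlm with hlm' | rfl
    · rw [ht'ne k (by omega), ht'ne l (by omega)]
      exact hmono k l hkl hlm'
    · rw [ht'ne k (by omega), ht'm]
      calc s.1 k ≤ N := Finset.le_sup (Finset.mem_range.2 (by omega))
        _ < t := hNt
  have hpos' : ∀ k, k < m + 1 → 1 ≤ t' k := by
    intro k hk
    rcases Nat.lt_succ_iff_lt_or_eq.1 hk with hk' | rfl
    · rw [ht'ne k (by omega)]; exact hpos k hk'
    · rw [ht'm]; omega
  have hsub' : ∀ a, fam' a ⊆ 𝒯 := fun a y hy => hsub a hy.1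
  have hunc' : ∀ a, ¬ (fam' a).Countable := by
    intro a
    have hres : s.2 a = G (fun k : Fin m => a k.val) := by
      apply hdep
      intro k hk
      simp [hG, hext, hk]
    have h2 := hsplit (fun k : Fin m => a k.val) (a m)
    intro hcnt
    apply h2
    rw [← hres]
    exact hcnt
  have hval' : ∀ a y, y ∈ fam' a → ∀ k, k < m + 1 → y (t' k) = a k := by
    intro a y hy k hk
    rcases Nat.lt_succ_iff_lt_or_eq.1 hk with hk' | rfl
    · rw [ht'ne k (by omega)]
      exact hval a y hy.1 k hk'
    · rw [ht'm]
      exact hy.2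
  have hdep' : ∀ a b, (∀ k, k < m + 1 → a k = b k) → fam' a = fam' b := by
    intro a b hab
    have h1 : s.2 a = s.2 b := hdep a b (fun k hk => hab k (by omega))
    have h2 : a m = b m := hab m (Nat.lt_succ_self m)
    simp only [hfam', h1, h2]
  exact ⟨(t', fam'), ⟨hmono', hpos', hsub', hunc', hval', hdep'⟩,
    ht'ne, fun a y hy => hy.1⟩

theorem shatter_of_choiceDomain (X : BinarySubshift)
    (hsub𝒯 : 𝒯 ⊆ X.carrier) (hT : ¬𝒯.Countable) (hcd : IsChoiceDomain 𝒯) :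
    Nonempty (ShatterSys X) := by
  classical
  have hbase : SInv 𝒯 0 ((fun _ => 0), (fun _ => 𝒯)) :=
    ⟨fun k l _ h => absurd h (Nat.not_lt_zero l),
     fun k h => absurd h (Nat.not_lt_zero k),
     fun a => subset_rfl,
     fun a => hT,
     fun a y _ k h => absurd h (Nat.not_lt_zero k),
     fun a b _ => rfl⟩
  let stages : ∀ m : ℕ, {s : (ℕ → ℕ) × ((ℕ → Bool) → Set BinSeq) // SInv 𝒯 m s} :=
    fun m => Nat.rec ⟨_, hbase⟩
      (fun m prev => ⟨(sinv_step hcd m prev.1 prev.2).choose,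
        (sinv_step hcd m prev.1 prev.2).choose_spec.1⟩) m
  have hstep : ∀ m, (∀ k, k ≠ m → (stages (m + 1)).1.1 k = (stages m).1.1 k) ∧
      (∀ a, (stages (m + 1)).1.2 a ⊆ (stages m).1.2 a) :=
    fun m => (sinv_step hcd m (stages m).1 (stages m).2).choose_spec.2
  set tf : ℕ → ℕ := fun k => (stages (k + 1)).1.1 k with htf
  have hstable : ∀ m k, k < m → (stages m).1.1 k = tf k := by
    intro m
    induction m with
    | zero => intro k hk; omega
    | succ m ih =>
        intro k hk
        rcases Nat.lt_succ_iff_lt_or_eq.1 hk with hk' | rfl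
        · rw [(hstep m).1 k (by omega)]
          exact ih k hk'
        · rfl
  refine ⟨⟨tf, ?_, ?_, ?_⟩⟩
  · intro k l hkl
    have h1 : (stages (l + 1)).1.1 k = tf k := hstable (l + 1) k (by omega)
    have h2 := ((stages (l + 1)).2).1 k l hkl (Nat.lt_succ_self l)
    rw [h1] at h2
    exact h2
  · intro k
    have := ((stages (k + 1)).2).2.1 k (Nat.lt_succ_self k)
    exact this
  · intro m ε
    set a : ℕ → Bool := fun k => if h : k < m then ε ⟨k, h⟩ else false with ha
    have hunc := ((stages m).2).2.2.2.1 a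
    have hne : ((stages m).1.2 a).Nonempty := by
      rw [Set.nonempty_iff_ne_empty]
      intro h
      rw [h] at hunc
      exact hunc Set.countable_empty
    rcases hne with ⟨y, hy⟩
    refine ⟨y, hsub𝒯 (((stages m).2).2.2.1 a hy), ?_⟩
    intro k
    have := ((stages m).2).2.2.2.2.1 a y hy k.val k.isLt
    rw [hstable m k.val k.isLt] at this
    rw [this]
    simp [ha]

end Backward
-- ===== Layer 6 : forward direction =====

section Forward

variable (X : BinarySubshift)

/-- evaluation functions generating the pointwise closure. -/
def eev (n : ℕ) : ↥X.carrier → Bool := fun x => x.val (n + 1)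

lemma eev_continuous (n : ℕ) : Continuous (eev X n) :=
  (continuous_apply (n + 1)).comp continuous_subtype_val

/-- the pointwise closure of the evaluation maps. -/
def KK : Set (↥X.carrier → Bool) := closure (Set.range (eev X))

lemma ellis_invar : ∀ u ∈ X.Ellis, ∀ (x : ↥X.carrier) (j : ℕ),
    (u x).val j = (u (X.S^[j] x)).val 0 := by
  have hclosed : IsClosed {u : ↥X.carrier → ↥X.carrier |
      ∀ (x : ↥X.carrier) (j : ℕ), (u x).val j = (u (X.S^[j] x)).val 0} := by
    have : {u : ↥X.carrier → ↥X.carrier |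
        ∀ (x : ↥X.carrier) (j : ℕ), (u x).val j = (u (X.S^[j] x)).val 0} =
        ⋂ (x : ↥X.carrier), ⋂ (j : ℕ),
          {u | (u x).val j = (u (X.S^[j] x)).val 0} := by
      ext u; simp only [Set.mem_setOf_eq, Set.mem_iInter]
    rw [this]
    apply isClosed_iInter; intro x
    apply isClosed_iInter; intro j
    apply isClosed_eq
    · exact ((continuous_apply j).comp continuous_subtype_val).comp (continuous_apply x)
    · exact ((continuous_apply 0).comp continuous_subtype_val).comp
        (continuous_apply (X.S^[j] x))
  have hrange : Set.range (fun n : ℕ => X.S^[n + 1]) ⊆ {u : ↥X.carrier → ↥X.carrier |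
      ∀ (x : ↥X.carrier) (j : ℕ), (u x).val j = (u (X.S^[j] x)).val 0} := by
    rintro u ⟨n, rfl⟩ x j
    rw [S_iter_val, S_iter_val, S_iter_val, binShift_iter_apply, binShift_iter_apply,
      binShift_iter_apply]
    exact congrArg x.val (by omega)
  intro u hu
  exact closure_minimal hrange hclosed hu

lemma card_KK_of_nonTame (h : X.NonTame) :
    Cardinal.continuum < Cardinal.mk ↥(KK X) := by
  set hmap : (↥X.carrier → ↥X.carrier) → (↥X.carrier → Bool) :=
    fun u => fun x => (u x).val 0 with hhm
  have hcont : Continuous hmap := by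
    apply continuous_pi
    intro x
    exact ((continuous_apply 0).comp continuous_subtype_val).comp (continuous_apply x)
  have hmem : ∀ u ∈ X.Ellis, hmap u ∈ KK X := by
    intro u hu
    have h1 : hmap u ∈ hmap '' (closure (Set.range fun n : ℕ => X.S^[n + 1])) :=
      ⟨u, hu, rfl⟩
    have h2 : hmap '' (closure (Set.range fun n : ℕ => X.S^[n + 1])) ⊆
        closure (hmap '' (Set.range fun n : ℕ => X.S^[n + 1])) :=
      image_closure_subset_closure_image hcont
    have h3 : hmap '' (Set.range fun n : ℕ => X.S^[n + 1]) = Set.range (eev X) := by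
      rw [← Set.range_comp]
      apply congrArg Set.range
      funext n x
      show (((X.S^[n+1]) x).val) 0 = x.val (n + 1)
      rw [S_iter_val, binShift_iter_apply, Nat.zero_add]
    rw [h3] at h2
    exact h2 h1
  let Ψ : ↥X.Ellis → ↥(KK X) := fun u => ⟨hmap u.val, hmem u.val u.2⟩
  have hinj : Function.Injective Ψ := by
    intro u u' huu
    have heq : hmap u.val = hmap u'.val := congrArg Subtype.val huu
    apply Subtype.ext
    funext x
    apply Subtype.ext
    funext j
    have h1 := ellis_invar X u.val u.2 x j
    have h2 := ellis_invar X u'.val u'.2 x j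
    rw [h1, h2]
    show hmap u.val (X.S^[j] x) = hmap u'.val (X.S^[j] x)
    rw [heq]
  calc Cardinal.continuum < Cardinal.mk ↥X.Ellis := h
    _ ≤ Cardinal.mk ↥(KK X) := Cardinal.mk_le_of_injective hinj

/-- a `{0,1}`-valued function is *good* if on every nonempty subset it is constant on
some relatively open nonempty piece. -/
def GoodFn {α : Type} [TopologicalSpace α] (g : α → Bool) : Prop :=
  ∀ P : Set α, P.Nonempty → ∃ V, IsOpen V ∧ (V ∩ P).Nonempty ∧ ∃ b, ∀ x ∈ V ∩ P, g x = b

lemma goodFn_of_continuous {α : Type} [TopologicalSpace α] {g : α → Bool}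
    (h : Continuous g) : GoodFn g := by
  intro P hP
  rcases hP with ⟨x₀, hx₀⟩
  refine ⟨g ⁻¹' {g x₀}, h.isOpen_preimage _ (isOpen_discrete _), ⟨x₀, rfl, hx₀⟩, g x₀, ?_⟩
  intro x hx
  exact hx.1

open MeasureTheory MeasurableSpace in
lemma goodFn_measurable {α : Type} [TopologicalSpace α] {ℬ : Set (Set α)}
    (hbasis : TopologicalSpace.IsTopologicalBasis ℬ) (hcnt : ℬ.Countable)
    {g : α → Bool} (hg : GoodFn g) :
    MeasurableSet[MeasurableSpace.generateFrom ℬ] (g ⁻¹' {true}) := by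
  letI M := MeasurableSpace.generateFrom ℬ
  set B : Set α := g ⁻¹' {true} with hB
  set 𝒞 : Set (Set α) := {U | U ∈ ℬ ∧ MeasurableSet[M] (B ∩ U)} with h𝒞
  have h𝒞cnt : 𝒞.Countable := hcnt.mono (fun U hU => hU.1)
  set Ω : Set α := ⋃₀ 𝒞 with hΩ
  have hΩmeas : MeasurableSet[M] Ω :=
    MeasurableSet.sUnion h𝒞cnt (fun U hU => measurableSet_generateFrom hU.1)
  have hBΩ : MeasurableSet[M] (B ∩ Ω) := by
    have hrw : B ∩ Ω = ⋃ U ∈ 𝒞, B ∩ U := by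
      rw [hΩ, Set.sUnion_eq_biUnion, Set.inter_iUnion₂]
    rw [hrw]
    exact MeasurableSet.biUnion h𝒞cnt (fun U hU => hU.2)
  have hΩuniv : Ω = Set.univ := by
    by_contra hne
    rcases hg Ωᶜ (Set.nonempty_compl.2 hne) with ⟨V, hV, hVne, b, hb⟩
    rcases hVne with ⟨x, hxV, hxΩ⟩
    rcases hbasis.exists_subset_of_mem_open hxV hV with ⟨U, hUℬ, hxU, hUV⟩
    have hBU : MeasurableSet[M] (B ∩ U) := by
      have hsplit : B ∩ U = ((B ∩ Ω) ∩ U) ∪ (B ∩ (U \ Ω)) := by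
        ext y
        simp only [Set.mem_inter_iff, Set.mem_union, Set.mem_diff]
        by_cases hy : y ∈ Ω <;> tauto
      rw [hsplit]
      apply MeasurableSet.union (hBΩ.inter (measurableSet_generateFrom hUℬ))
      cases b with
      | false =>
          have he : B ∩ (U \ Ω) = ∅ := by
            rw [Set.eq_empty_iff_forall_notMem]
            rintro y ⟨hyB, hyU, hyΩ⟩
            have := hb y ⟨hUV hyU, hyΩ⟩
            rw [hB] at hyB
            simp only [Set.mem_preimage, Set.mem_singleton_iff] at hyB
            rw [hyB] at this
            exact Bool.noConfusion this
          rw [he]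
          exact MeasurableSet.empty
      | true =>
          have he : B ∩ (U \ Ω) = U \ Ω := by
            apply Set.inter_eq_self_of_subset_right
            rintro y ⟨hyU, hyΩ⟩
            have := hb y ⟨hUV hyU, hyΩ⟩
            rw [hB]
            simpa using this
          rw [he]
          exact (measurableSet_generateFrom hUℬ).diff hΩmeas
    have hUΩ : U ⊆ Ω := Set.subset_sUnion_of_mem ⟨hUℬ, hBU⟩
    exact hxΩ (hUΩ hxU)
  have : B = B ∩ Ω := by rw [hΩuniv, Set.inter_univ]
  rw [this]
  exact hBΩ

open MeasureTheory MeasurableSpace in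
lemma card_goodFn {α : Type} [TopologicalSpace α]
    [SecondCountableTopology α] :
    Cardinal.mk {g : α → Bool // GoodFn g} ≤ Cardinal.continuum := by
  obtain ⟨ℬ, hcnt, -, hbasis⟩ := TopologicalSpace.exists_countable_basis α
  have hℬcard : Cardinal.mk ℬ ≤ Cardinal.continuum :=
    le_trans hcnt.le_aleph0 Cardinal.aleph0_le_continuum
  have hgen : Cardinal.mk {t : Set α | GenerateMeasurable ℬ t} ≤ Cardinal.continuum :=
    cardinal_generateMeasurable_le_continuum hℬcard
  have hmeas : ∀ g : {g : α → Bool // GoodFn g}, GenerateMeasurable ℬ (g.val ⁻¹' {true}) :=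
    fun g => goodFn_measurable hbasis hcnt g.2
  have hinj : Function.Injective
      (fun g : {g : α → Bool // GoodFn g} =>
        (⟨g.val ⁻¹' {true}, hmeas g⟩ : {t : Set α | GenerateMeasurable ℬ t})) := by
    intro g g' h
    have h2 : g.val ⁻¹' {true} = g'.val ⁻¹' {true} := congrArg Subtype.val h
    apply Subtype.ext
    funext x
    have h3 : x ∈ g.val ⁻¹' {true} ↔ x ∈ g'.val ⁻¹' {true} := by rw [h2]
    simp only [Set.mem_preimage, Set.mem_singleton_iff] at h3
    cases hgx : g.val x <;> cases hgx' : g'.val x <;> first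
      | rfl
      | (exfalso; rw [hgx, hgx'] at h3; simp at h3)
  exact le_trans (Cardinal.mk_le_of_injective hinj) hgen

lemma exists_badFn (h : Cardinal.continuum < Cardinal.mk ↥(KK X)) :
    ∃ g ∈ KK X, ¬ GoodFn g := by
  by_contra hno
  push_neg at hno
  have hinj : Function.Injective
      (fun g : ↥(KK X) => (⟨g.val, hno g.val g.2⟩ : {g : ↥X.carrier → Bool // GoodFn g})) := by
    intro g g' hgg
    apply Subtype.ext
    have h2 := congrArg Subtype.val hgg
    exact h2
  have := le_trans (Cardinal.mk_le_of_injective hinj) (card_goodFn (α := ↥X.carrier))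
  exact absurd this (not_le.2 h)

lemma eventually_agree {g : ↥X.carrier → Bool} (hgK : g ∈ KK X) (hbad : ¬ GoodFn g)
    (F₀ : Set ↥X.carrier) (hfin : F₀.Finite) (N : ℕ) :
    ∃ n, N < n ∧ ∀ x ∈ F₀, eev X n x = g x := by
  by_contra hcon
  push_neg at hcon
  set A : Set ℕ := {n | ∀ x ∈ F₀, eev X n x = g x} with hA
  have hAsub : A ⊆ {n | n ≤ N} := by
    intro n hn
    simp only [Set.mem_setOf_eq]
    by_contra hle
    rcases hcon n (by omega) with ⟨x, hx, hne⟩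
    exact hne (hn x hx)
  have hcl : g ∈ closure (eev X '' A) := by
    rw [mem_closure_iff]
    intro O hO hgO
    rcases isOpen_pi_iff.1 hO g hgO with ⟨I, u, hu, hsub⟩
    set W : Set (↥X.carrier → Bool) := ⋂ x ∈ ((I : Set ↥X.carrier) ∪ F₀), {h | h x = g x}
      with hW
    have hWopen : IsOpen W := by
      apply Set.Finite.isOpen_biInter (Set.Finite.union I.finite_toSet hfin)
      intro x _
      show IsOpen ((fun h : ↥X.carrier → Bool => h x) ⁻¹' {g x})
      exact IsOpen.preimage (continuous_apply x) (isOpen_discrete _)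
    have hgW : g ∈ W := by
      rw [hW]
      apply Set.mem_iInter₂.2
      intro x _
      rfl
    rcases mem_closure_iff.1 hgK W hWopen hgW with ⟨h', hh'W, hh'K⟩
    rcases hh'K with ⟨n, rfl⟩
    have hWmem := Set.mem_iInter₂.1 hh'W
    refine ⟨eev X n, ?_, ⟨n, ?_, rfl⟩⟩
    · apply hsub
      rw [Set.mem_pi]
      intro i hi
      have := hWmem i (Set.mem_union_left _ hi)
      rw [Set.mem_setOf_eq] at this
      rw [this]
      exact (hu i hi).2
    · intro x hx
      exact hWmem x (Set.mem_union_right _ hx)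
  have hfinA : (eev X '' A).Finite :=
    ((Set.finite_le_nat N).subset hAsub).image _
  have hgmem : g ∈ eev X '' A := by
    rw [← hfinA.isClosed.closure_eq]
    exact hcl
  rcases hgmem with ⟨n, -, rfl⟩
  exact hbad (goodFn_of_continuous (eev_continuous X n))

end Forward
-- ===== Layer 7 : tree construction from a bad limit function =====

section Tree

variable {X : BinarySubshift}

def TInv (X : BinarySubshift) (P : Set ↥X.carrier) (m : ℕ)
    (s : (ℕ → ℕ) × ((ℕ → Bool) → Set ↥X.carrier)) : Prop :=
  (∀ k l : ℕ, k < l → l < m → s.1 k < s.1 l) ∧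
  (∀ a, IsOpen (s.2 a)) ∧
  (∀ a, (s.2 a ∩ P).Nonempty) ∧
  (∀ a y, y ∈ s.2 a ∩ P → ∀ k, k < m → y.val (s.1 k + 1) = a k) ∧
  (∀ a b, (∀ k, k < m → a k = b k) → s.2 a = s.2 b)

lemma tinv_step {g : ↥X.carrier → Bool} (hgK : g ∈ KK X) (hbad : ¬ GoodFn g)
    {P : Set ↥X.carrier}
    (hdense : ∀ V, IsOpen V → (V ∩ P).Nonempty → ∀ b, ∃ x ∈ V ∩ P, g x = b)
    (m : ℕ) (s : (ℕ → ℕ) × ((ℕ → Bool) → Set ↥X.carrier)) (hs : TInv X P m s) :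
    ∃ s', TInv X P (m + 1) s' ∧ (∀ k, k ≠ m → s'.1 k = s.1 k) := by
  classical
  obtain ⟨hmono, hopen, hne, hval, hdep⟩ := hs
  set ext : (Fin m → Bool) → (ℕ → Bool) :=
    fun ε k => if h : k < m then ε ⟨k, h⟩ else false with hext
  have hpts : ∀ (ε : Fin m → Bool) (b : Bool), ∃ x, x ∈ s.2 (ext ε) ∩ P ∧ g x = b := by
    intro ε b
    rcases hdense (s.2 (ext ε)) (hopen _) (hne _) b with ⟨x, hx, hgx⟩
    exact ⟨x, hx, hgx⟩
  choose q hq hgq using hpts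
  set F₀ : Set ↥X.carrier := Set.range (fun p : (Fin m → Bool) × Bool => q p.1 p.2) with hF₀
  obtain ⟨n, hNn, hagree⟩ := eventually_agree X hgK hbad F₀ (Set.finite_range _)
      ((Finset.range (m + 1)).sup s.1)
  set t' : ℕ → ℕ := Function.update s.1 m n with ht'
  set fam' : (ℕ → Bool) → Set ↥X.carrier :=
    fun a => s.2 a ∩ (eev X n) ⁻¹' {a m} with hfam'
  have ht'ne : ∀ k, k ≠ m → t' k = s.1 k := fun k hk => Function.update_of_ne hk _ _
  have ht'm : t' m = n := Function.update_self _ _ _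
  have hmono' : ∀ k l : ℕ, k < l → l < m + 1 → t' k < t' l := by
    intro k l hkl hlm
    rcases Nat.lt_succ_iff_lt_or_eq.1 hlm with hlm' | rfl
    · rw [ht'ne k (by omega), ht'ne l (by omega)]
      exact hmono k l hkl hlm'
    · rw [ht'ne k (by omega), ht'm]
      calc s.1 k ≤ (Finset.range (l + 1)).sup s.1 :=
            Finset.le_sup (Finset.mem_range.2 (by omega))
        _ < n := hNn
  have hopen' : ∀ a, IsOpen (fam' a) := by
    intro a
    apply IsOpen.inter (hopen a)
    exact IsOpen.preimage (eev_continuous X n) (isOpen_discrete _)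
  have hres : ∀ a : ℕ → Bool, s.2 a = s.2 (ext (fun k : Fin m => a k.val)) := by
    intro a
    apply hdep
    intro k hk
    simp [hext, hk]
  have hne' : ∀ a, (fam' a ∩ P).Nonempty := by
    intro a
    refine ⟨q (fun k : Fin m => a k.val) (a m), ⟨⟨?_, ?_⟩, ?_⟩⟩
    · rw [hres a]
      exact (hq (fun k : Fin m => a k.val) (a m)).1
    · have hmem : q (fun k : Fin m => a k.val) (a m) ∈ F₀ :=
        ⟨(fun k : Fin m => a k.val, a m), rfl⟩
      have h1 := hagree _ hmem
      simp only [Set.mem_preimage, Set.mem_singleton_iff]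
      rw [h1]
      exact hgq _ _
    · exact (hq _ _).2
  have hval' : ∀ a y, y ∈ fam' a ∩ P → ∀ k, k < m + 1 → y.val (t' k + 1) = a k := by
    intro a y hy k hk
    rcases Nat.lt_succ_iff_lt_or_eq.1 hk with hk' | rfl
    · rw [ht'ne k (by omega)]
      exact hval a y ⟨hy.1.1, hy.2⟩ k hk'
    · rw [ht'm]
      have := hy.1.2
      simp only [Set.mem_preimage, Set.mem_singleton_iff] at this
      exact this
  have hdep' : ∀ a b, (∀ k, k < m + 1 → a k = b k) → fam' a = fam' b := by
    intro a b hab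
    have h1 : s.2 a = s.2 b := hdep a b (fun k hk => hab k (by omega))
    have h2 : a m = b m := hab m (Nat.lt_succ_self m)
    simp only [hfam', h1, h2]
  exact ⟨(t', fam'), ⟨hmono', hopen', hne', hval', hdep'⟩, ht'ne⟩

lemma shatter_of_bad {g : ↥X.carrier → Bool} (hgK : g ∈ KK X) (hbad : ¬ GoodFn g) :
    Nonempty (ShatterSys X) := by
  classical
  have hP : ∃ P : Set ↥X.carrier, P.Nonempty ∧
      ∀ V, IsOpen V → (V ∩ P).Nonempty → ∀ b, ∃ x ∈ V ∩ P, g x = b := by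
    rw [GoodFn] at hbad
    push_neg at hbad
    rcases hbad with ⟨P, hPne, hPd⟩
    refine ⟨P, hPne, ?_⟩
    intro V hV hVP b
    rcases hPd V hV hVP (!b) with ⟨x, hx, hgx⟩
    refine ⟨x, hx, ?_⟩
    cases hb : g x <;> cases b <;> simp_all
  rcases hP with ⟨P, hPne, hdense⟩
  have hbase : TInv X P 0 ((fun _ => 0), (fun _ => Set.univ)) :=
    ⟨fun k l _ h => absurd h (Nat.not_lt_zero l),
     fun a => isOpen_univ,
     fun a => by rw [Set.univ_inter]; exact hPne,
     fun a y _ k h => absurd h (Nat.not_lt_zero k),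
     fun a b _ => rfl⟩
  let stages : ∀ m : ℕ, {s : (ℕ → ℕ) × ((ℕ → Bool) → Set ↥X.carrier) // TInv X P m s} :=
    fun m => Nat.rec ⟨_, hbase⟩
      (fun m prev => ⟨(tinv_step hgK hbad hdense m prev.1 prev.2).choose,
        (tinv_step hgK hbad hdense m prev.1 prev.2).choose_spec.1⟩) m
  have hstep : ∀ m, ∀ k, k ≠ m → (stages (m + 1)).1.1 k = (stages m).1.1 k :=
    fun m => (tinv_step hgK hbad hdense m (stages m).1 (stages m).2).choose_spec.2
  set tf : ℕ → ℕ := fun k => (stages (k + 1)).1.1 k with htf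
  have hstable : ∀ m k, k < m → (stages m).1.1 k = tf k := by
    intro m
    induction m with
    | zero => intro k hk; omega
    | succ m ih =>
        intro k hk
        rcases Nat.lt_succ_iff_lt_or_eq.1 hk with hk' | rfl
        · rw [hstep m k (by omega)]
          exact ih k hk'
        · rfl
  refine ⟨⟨fun k => tf k + 1, ?_, ?_, ?_⟩⟩
  · intro k l hkl
    have h1 : (stages (l + 1)).1.1 k = tf k := hstable (l + 1) k (by omega)
    have h2 := ((stages (l + 1)).2).1 k l hkl (Nat.lt_succ_self l)
    rw [h1] at h2
    have h3 : (stages (l + 1)).1.1 l = tf l := rfl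
    rw [h3] at h2
    show tf k + 1 < tf l + 1
    omega
  · intro k
    show 1 ≤ tf k + 1
    omega
  · intro m ε
    set a : ℕ → Bool := fun k => if h : k < m then ε ⟨k, h⟩ else false with ha
    rcases ((stages m).2).2.2.1 a with ⟨y, hy⟩
    refine ⟨y.val, y.2, ?_⟩
    intro k
    have := ((stages m).2).2.2.2.1 a y hy k.val k.isLt
    rw [hstable m k.val k.isLt] at this
    rw [this]
    simp [ha]

end Tree

/-- A binary subshift is non-tame iff it admits an uncountable
choice domain. -/
theorem subshift_nontame_iff_uncountable_choice_domain (X : BinarySubshift) :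
    X.NonTame ↔ ∃ 𝒯 ⊆ X.carrier, ¬𝒯.Countable ∧ IsChoiceDomain 𝒯 := by
  constructor
  · intro h
    obtain ⟨g, hgK, hbad⟩ := exists_badFn X (card_KK_of_nonTame X h)
    obtain ⟨T⟩ := shatter_of_bad hgK hbad
    exact T.choiceDomain
  · rintro ⟨𝒯, hsub, hunc, hcd⟩
    obtain ⟨T⟩ := shatter_of_choiceDomain X hsub hunc hcd
    exact T.nonTame
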